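/- Let E, F be real Banach spaces, T > 0, q ∈ (1,∞), and let f : E × ℝ → F be continuous. Let y : [0,T] → E be continuous, v ∈ L^q((0,T);ℝ), and suppose there are δ > 0 and L > 0 such that for every t ∈ [0,T], all e₁, e₂ ∈ E with ‖eᵢ − y(t)‖_E ≤ δ, and all x₁, x₂ ∈ ℝ one has ‖f(e₁,x₁) − f(e₂,x₂)‖_F ≤ L(‖e₁−e₂‖_E + |x₁−x₂|). Assume further that for every t ∈ [0,T], e ∈ E with ‖e − y(t)‖_E ≤ δ, x ∈ ℝ, and every direction (k,l) ∈ E × ℝ, the directional derivative D((e,x);(k,l)) := lim_{λ→0⁺} (f(e+λk, x+λl) − f(e,x))/λ exists in F. Then for every continuous h : [0,T] → E and every l ∈ L^q((0,T);ℝ), the difference quotients t ↦ (f(y(t)+λh(t), v(t)+λl(t)) − f(y(t),v(t)))/λ converge, as λ → 0⁺, in L^q((0,T);F) to the function t ↦ D((y(t),v(t));(h(t),l(t))). -/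

import Mathlib

open Set MeasureTheory Filter Topology
open scoped ENNReal NNReal

/-- Convergence of difference quotients of the Nemytskii operator in `L^q((0,T);F)`:
under a uniform Lipschitz condition of `f` in the `δ`-tube around a continuous `y` and
existence of directional derivatives `D` of `f` at all points of the tube, for continuous
`h : [0,T] → E` and `l ∈ L^q((0,T);ℝ)` the difference quotients
`t ↦ (f(y(t)+λh(t), v(t)+λl(t)) − f(y(t),v(t)))/λ` converge in `L^q((0,T);F)` as `λ → 0⁺`
to `t ↦ D((y(t),v(t));(h(t),l(t)))`. -/
theorem nemytskii_diff_quotient_convergence {E F : Type*}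
    [NormedAddCommGroup E] [NormedSpace ℝ E] [CompleteSpace E]
    [NormedAddCommGroup F] [NormedSpace ℝ F] [CompleteSpace F]
    (T : ℝ) (hT : 0 < T) (q : ℝ) (hq : 1 < q)
    (f : E × ℝ → F) (hfc : Continuous f)
    (y : ℝ → E) (hy : ContinuousOn y (Set.Icc 0 T))
    (v : ℝ → ℝ) (hv : MemLp v (ENNReal.ofReal q) (volume.restrict (Set.Ioc 0 T)))
    (δ L : ℝ) (hδ : 0 < δ) (hL : 0 < L)
    (hlip : ∀ t ∈ Set.Icc (0 : ℝ) T, ∀ e₁ e₂ : E, ‖e₁ - y t‖ ≤ δ → ‖e₂ - y t‖ ≤ δ →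
      ∀ x₁ x₂ : ℝ, ‖f (e₁, x₁) - f (e₂, x₂)‖ ≤ L * (‖e₁ - e₂‖ + |x₁ - x₂|))
    (D : E × ℝ → E × ℝ → F)
    (hD : ∀ t ∈ Set.Icc (0 : ℝ) T, ∀ e : E, ‖e - y t‖ ≤ δ → ∀ x : ℝ, ∀ k : E, ∀ l : ℝ,
      Tendsto (fun lam : ℝ => lam⁻¹ • (f (e + lam • k, x + lam * l) - f (e, x)))
        (𝓝[>] (0 : ℝ)) (𝓝 (D (e, x) (k, l)))) :
    ∀ h : ℝ → E, ContinuousOn h (Set.Icc 0 T) →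
      ∀ l : ℝ → ℝ, MemLp l (ENNReal.ofReal q) (volume.restrict (Set.Ioc 0 T)) →
        Tendsto
          (fun lam : ℝ => ∫ t in Set.Ioc (0 : ℝ) T,
            ‖lam⁻¹ • (f (y t + lam • h t, v t + lam * l t) - f (y t, v t)) -
              D (y t, v t) (h t, l t)‖ ^ q)
          (𝓝[>] (0 : ℝ)) (𝓝 0) := by
  intro h hh l hl
  have hq0 : (0:ℝ) < q := by linarith
  set μ := volume.restrict (Set.Ioc (0:ℝ) T) with hμdef
  haveI : IsFiniteMeasure μ := by
    constructor
    rw [hμdef, Measure.restrict_apply_univ]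
    exact measure_Ioc_lt_top
  -- bound on h
  obtain ⟨M0, hM0⟩ := isCompact_Icc.exists_bound_of_continuousOn hh
  set M : ℝ := max M0 0 with hMdef
  have hMnn : 0 ≤ M := le_max_right _ _
  have hMb : ∀ t ∈ Set.Icc (0:ℝ) T, ‖h t‖ ≤ M := fun t ht =>
    (hM0 t ht).trans (le_max_left _ _)
  have hM1 : (0:ℝ) < M + 1 := by linarith
  -- measurability
  have hym : AEStronglyMeasurable y μ :=
    (hy.mono Set.Ioc_subset_Icc_self).aestronglyMeasurable measurableSet_Ioc
  have hhm : AEStronglyMeasurable h μ :=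
    (hh.mono Set.Ioc_subset_Icc_self).aestronglyMeasurable measurableSet_Ioc
  have hvm : AEStronglyMeasurable v μ := hv.aestronglyMeasurable
  have hlm : AEStronglyMeasurable l μ := hl.aestronglyMeasurable
  have hquotm : ∀ lam : ℝ, AEStronglyMeasurable
      (fun t => lam⁻¹ • (f (y t + lam • h t, v t + lam * l t) - f (y t, v t))) μ := by
    intro lam
    have h1 : AEStronglyMeasurable (fun t => (y t + lam • h t, v t + lam * l t)) μ :=
      (hym.add (hhm.const_smul lam)).prodMk (hvm.add (hlm.const_smul lam))
    have h2 : AEStronglyMeasurable (fun t => (y t, v t)) μ := hym.prodMk hvm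
    exact ((hfc.comp_aestronglyMeasurable h1).sub
      (hfc.comp_aestronglyMeasurable h2)).const_smul lam⁻¹
  -- pointwise convergence
  have hDpt : ∀ t ∈ Set.Icc (0:ℝ) T,
      Tendsto (fun lam : ℝ => lam⁻¹ • (f (y t + lam • h t, v t + lam * l t) - f (y t, v t)))
        (𝓝[>] (0:ℝ)) (𝓝 (D (y t, v t) (h t, l t))) := fun t ht =>
    hD t ht (y t) (by simp [hδ.le]) (v t) (h t) (l t)
  have hDm : AEStronglyMeasurable (fun t => D (y t, v t) (h t, l t)) μ :=
    aestronglyMeasurable_of_tendsto_ae (𝓝[>] (0:ℝ)) hquotm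
      ((ae_restrict_mem measurableSet_Ioc).mono fun t ht =>
        hDpt t (Set.Ioc_subset_Icc_self ht))
  -- key bound on quotients
  have key : ∀ t ∈ Set.Icc (0:ℝ) T, ∀ lam : ℝ, 0 < lam → lam * (M + 1) ≤ δ →
      ‖lam⁻¹ • (f (y t + lam • h t, v t + lam * l t) - f (y t, v t))‖ ≤
        L * (‖h t‖ + ‖l t‖) := by
    intro t ht lam hlam hlamδ
    have h1 : ‖(y t + lam • h t) - y t‖ ≤ δ := by
      have : ‖lam • h t‖ ≤ δ := by
        rw [norm_smul, Real.norm_eq_abs, abs_of_pos hlam]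
        nlinarith [hMb t ht, norm_nonneg (h t)]
      simpa using this
    have h2 : ‖y t - y t‖ ≤ δ := by simp [hδ.le]
    have hlp := hlip t ht (y t + lam • h t) (y t) h1 h2 (v t + lam * l t) (v t)
    have e1 : ‖(y t + lam • h t) - y t‖ = lam * ‖h t‖ := by
      simp [norm_smul, abs_of_pos hlam]
    have e2 : |(v t + lam * l t) - v t| = lam * |l t| := by
      simp [abs_mul, abs_of_pos hlam]
    rw [e1, e2] at hlp
    rw [norm_smul, Real.norm_eq_abs, abs_inv, abs_of_pos hlam, inv_mul_le_iff₀ hlam]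
    calc ‖f (y t + lam • h t, v t + lam * l t) - f (y t, v t)‖
        ≤ L * (lam * ‖h t‖ + lam * |l t|) := hlp
      _ = lam * (L * (‖h t‖ + ‖l t‖)) := by rw [Real.norm_eq_abs]; ring
  have hev : ∀ᶠ lam in 𝓝[>] (0:ℝ), lam ∈ Set.Ioo (0:ℝ) (δ / (M + 1)) :=
    Ioo_mem_nhdsGT_of_mem ⟨le_refl 0, div_pos hδ hM1⟩
  have hmul : ∀ lam ∈ Set.Ioo (0:ℝ) (δ / (M + 1)), lam * (M + 1) ≤ δ := by
    intro lam hlam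
    rw [← le_div_iff₀ hM1]
    exact hlam.2.le
  -- bound on D
  have hDb : ∀ t ∈ Set.Icc (0:ℝ) T, ‖D (y t, v t) (h t, l t)‖ ≤ L * (‖h t‖ + ‖l t‖) := by
    intro t ht
    refine le_of_tendsto (hDpt t ht).norm ?_
    exact hev.mono fun lam hlam => key t ht lam hlam.1 (hmul lam hlam)
  -- integrable bound
  have hgmem : MemLp (fun t => ‖h t‖ + ‖l t‖) (ENNReal.ofReal q) μ := by
    have hhb : MemLp h (ENNReal.ofReal q) μ :=
      MemLp.of_bound hhm M ((ae_restrict_mem measurableSet_Ioc).mono fun t ht =>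
        hMb t (Set.Ioc_subset_Icc_self ht))
    exact hhb.norm.add hl.norm
  have hgint : Integrable (fun t => (‖h t‖ + ‖l t‖) ^ q) μ := by
    have hne : ENNReal.ofReal q ≠ 0 := by
      simp [ENNReal.ofReal_eq_zero, not_le, hq0]
    have := hgmem.integrable_norm_rpow hne ENNReal.ofReal_ne_top
    rw [ENNReal.toReal_ofReal hq0.le] at this
    refine this.congr (Filter.Eventually.of_forall fun t => ?_)
    simp only [Real.norm_eq_abs]
    rw [abs_of_nonneg (by positivity)]
  have hbint : Integrable (fun t => (2 * L) ^ q * (‖h t‖ + ‖l t‖) ^ q) μ :=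
    hgint.const_mul _
  -- dominated convergence
  have main := tendsto_integral_filter_of_dominated_convergence
    (μ := μ) (l := 𝓝[>] (0:ℝ))
    (F := fun lam t => ‖lam⁻¹ • (f (y t + lam • h t, v t + lam * l t) - f (y t, v t)) -
      D (y t, v t) (h t, l t)‖ ^ q)
    (f := fun _ => (0:ℝ))
    (fun t => (2 * L) ^ q * (‖h t‖ + ‖l t‖) ^ q)
    (Filter.Eventually.of_forall fun lam => by
      have : AEStronglyMeasurable
          (fun t => ‖lam⁻¹ • (f (y t + lam • h t, v t + lam * l t) - f (y t, v t)) -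
            D (y t, v t) (h t, l t)‖) μ := ((hquotm lam).sub hDm).norm
      exact ((this.aemeasurable.pow_const q).aestronglyMeasurable))
    (hev.mono fun lam hlam => by
      refine (ae_restrict_mem measurableSet_Ioc).mono fun t ht => ?_
      have ht' := Set.Ioc_subset_Icc_self ht
      have hb : ‖lam⁻¹ • (f (y t + lam • h t, v t + lam * l t) - f (y t, v t)) -
          D (y t, v t) (h t, l t)‖ ≤ 2 * L * (‖h t‖ + ‖l t‖) := by
        calc ‖_ - _‖ ≤ ‖lam⁻¹ • (f (y t + lam • h t, v t + lam * l t) - f (y t, v t))‖ +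
              ‖D (y t, v t) (h t, l t)‖ := norm_sub_le _ _
          _ ≤ L * (‖h t‖ + ‖l t‖) + L * (‖h t‖ + ‖l t‖) :=
              add_le_add (key t ht' lam hlam.1 (hmul lam hlam)) (hDb t ht')
          _ = 2 * L * (‖h t‖ + ‖l t‖) := by ring
      have hnn : (0:ℝ) ≤ ‖h t‖ + ‖l t‖ := by positivity
      rw [Real.norm_eq_abs, abs_of_nonneg (Real.rpow_nonneg (norm_nonneg _) q)]
      exact le_trans (Real.rpow_le_rpow (norm_nonneg _) hb hq0.le)
        (le_of_eq (Real.mul_rpow (by positivity) hnn)))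
    hbint
    ((ae_restrict_mem measurableSet_Ioc).mono fun t ht => by
      have h1 := (hDpt t (Set.Ioc_subset_Icc_self ht)).sub_const
        (D (y t, v t) (h t, l t))
      rw [sub_self] at h1
      have h2 : Tendsto (fun lam : ℝ =>
          ‖lam⁻¹ • (f (y t + lam • h t, v t + lam * l t) - f (y t, v t)) -
            D (y t, v t) (h t, l t)‖) (𝓝[>] (0:ℝ)) (𝓝 0) := by
        simpa using h1.norm
      have h3 := (Real.continuousAt_rpow_const 0 q (Or.inr hq0.le)).tendsto.comp h2
      simpa [Function.comp_def, Real.zero_rpow hq0.ne'] using h3)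
  simpa using main
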